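/- arXiv:0801.1909 — 2 statements merged into one kernel-verified Lean document; each statement's English description precedes it below -/
import Mathlib

section
/- In the edge-rooted binary tree T_n of depth n with edge resistances r_e = 2^{d(e)-1} X_e where X_e ∈ [a,b] (0 < a < b), the optimal unit flow Θ* from root to leaves satisfies, for every edge e at depth d(e), Θ*(e) ≤ bn/(a(n - d(e) + 1)2^{d(e)-1}). -/
/-- Effective resistance of the edge-rooted binary tree `T_n` (`treeRes (n-1)`
corresponds to `T_n`), via the series-parallel recursion. -/
noncomputable def treeRes : ℕ → (List Bool → ℝ) → ℝ
  | 0, w => w []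
  | n + 1, w =>
      w [] +
        (2 * treeRes n (fun l => w (true :: l))) * (2 * treeRes n (fun l => w (false :: l))) /
          (2 * treeRes n (fun l => w (true :: l)) + 2 * treeRes n (fun l => w (false :: l)))

/-- The optimal (current) unit flow of the tree: the root edge carries unit flow, and at
each node the flow splits between the two subtrees proportionally to their conductances. -/
noncomputable def treeFlow : ℕ → (List Bool → ℝ) → List Bool → ℝ
  | _, _, [] => 1
  | 0, _, _ :: _ => 0
  | n + 1, w, x :: l =>
      (treeRes n (fun m => w ((!x) :: m)) /
          (treeRes n (fun m => w (true :: m)) + treeRes n (fun m => w (false :: m)))) *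
        treeFlow n (fun m => w (x :: m)) l

lemma treeRes_lb (a : ℝ) (ha : 0 < a) :
    ∀ (n : ℕ) (w : List Bool → ℝ), (∀ l, a ≤ w l) → a * (n + 1) ≤ treeRes n w := by
  intro n
  induction n with
  | zero => intro w hw; simpa [treeRes] using hw []
  | succ k ih =>
    intro w hw
    have h1t := ih (fun l => w (true :: l)) (fun l => hw _)
    have h1f := ih (fun l => w (false :: l)) (fun l => hw _)
    set Rt := treeRes k (fun l => w (true :: l)) with hRtdef
    set Rf := treeRes k (fun l => w (false :: l)) with hRfdef
    have hc : 0 < a * (k + 1) := by positivity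
    have hRt : 0 < Rt := lt_of_lt_of_le hc h1t
    have hRf : 0 < Rf := lt_of_lt_of_le hc h1f
    have hsum : 0 < 2 * Rt + 2 * Rf := by linarith
    have hw0 := hw []
    have key : a * (k + 1) ≤ (2 * Rt) * (2 * Rf) / (2 * Rt + 2 * Rf) := by
      rw [le_div_iff₀ hsum]; nlinarith
    simp only [treeRes, ← hRtdef, ← hRfdef]
    push_cast
    linarith

lemma treeRes_ub (a b : ℝ) (ha : 0 < a) :
    ∀ (n : ℕ) (w : List Bool → ℝ), (∀ l, a ≤ w l ∧ w l ≤ b) → treeRes n w ≤ b * (n + 1) := by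
  intro n
  induction n with
  | zero => intro w hw; simpa [treeRes] using (hw []).2
  | succ k ih =>
    intro w hw
    have h2t := ih (fun l => w (true :: l)) (fun l => hw _)
    have h2f := ih (fun l => w (false :: l)) (fun l => hw _)
    have h1t := treeRes_lb a ha k (fun l => w (true :: l)) (fun l => (hw _).1)
    have h1f := treeRes_lb a ha k (fun l => w (false :: l)) (fun l => (hw _).1)
    set Rt := treeRes k (fun l => w (true :: l)) with hRtdef
    set Rf := treeRes k (fun l => w (false :: l)) with hRfdef
    have hc : 0 < a * (k + 1) := by positivity
    have hRt : 0 < Rt := lt_of_lt_of_le hc h1t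
    have hRf : 0 < Rf := lt_of_lt_of_le hc h1f
    have hsum : 0 < 2 * Rt + 2 * Rf := by linarith
    have hw0 := hw []
    have key : (2 * Rt) * (2 * Rf) / (2 * Rt + 2 * Rf) ≤ b * (k + 1) := by
      rw [div_le_iff₀ hsum]; nlinarith
    simp only [treeRes, ← hRtdef, ← hRfdef]
    push_cast
    linarith [hw0.2]

lemma treeFlow_key (a : ℝ) (ha : 0 < a) :
    ∀ (e : List Bool) (n : ℕ) (w : List Bool → ℝ), (∀ l, a ≤ w l) → e.length ≤ n →
      treeFlow n w e * (2 ^ e.length * treeRes (n - e.length) (fun m => w (e ++ m)))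
        ≤ treeRes n w := by
  intro e
  induction e with
  | nil => intro n w hw _; simp [treeFlow]
  | cons x l ih =>
    intro n w hw hlen
    match n with
    | 0 => simp at hlen
    | k + 1 =>
      have hlen' : l.length ≤ k := by simpa using hlen
      have IH := ih k (fun m => w (x :: m)) (fun m => hw _) hlen'
      have h1t := treeRes_lb a ha k (fun m => w (true :: m)) (fun m => hw _)
      have h1f := treeRes_lb a ha k (fun m => w (false :: m)) (fun m => hw _)
      set Rt := treeRes k (fun m => w (true :: m)) with hRtdef
      set Rf := treeRes k (fun m => w (false :: m)) with hRfdef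
      have hc : 0 < a * (k + 1) := by positivity
      have hRt : 0 < Rt := lt_of_lt_of_le hc h1t
      have hRf : 0 < Rf := lt_of_lt_of_le hc h1f
      have hsum : 0 < Rt + Rf := by linarith
      have hS : 0 < treeRes (k - l.length) (fun m => w (x :: (l ++ m))) := by
        refine lt_of_lt_of_le (by positivity) (treeRes_lb a ha _ _ (fun m => hw _))
      set S := treeRes (k - l.length) (fun m => w (x :: (l ++ m))) with hSdef
      set F := treeFlow k (fun m => w (x :: m)) l with hFdef
      -- rewrite goal
      show (treeRes k (fun m => w ((!x) :: m)) / (Rt + Rf)) * F *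
          (2 ^ (l.length + 1) * treeRes (k + 1 - (l.length + 1)) (fun m => w ((x :: l) ++ m)))
          ≤ treeRes (k + 1) w
      have hsub : k + 1 - (l.length + 1) = k - l.length := by omega
      have hfun : (fun m => w ((x :: l) ++ m)) = (fun m => w (x :: (l ++ m))) := by
        funext m; simp
      rw [hsub, hfun, ← hSdef]
      set Rx := treeRes k (fun m => w (x :: m)) with hRxdef
      have hRnx : treeRes k (fun m => w ((!x) :: m)) * Rx = Rt * Rf := by
        cases x <;> simp [hRxdef, hRtdef, hRfdef] <;> ring
      have hRnxpos : 0 ≤ treeRes k (fun m => w ((!x) :: m)) := by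
        cases x <;> simp [hRtdef, hRfdef] <;> linarith
      have step1 : (treeRes k (fun m => w ((!x) :: m)) / (Rt + Rf)) * F *
          (2 ^ (l.length + 1) * S)
          = (treeRes k (fun m => w ((!x) :: m)) / (Rt + Rf) * 2) * (F * (2 ^ l.length * S)) := by
        ring
      rw [step1]
      have step2 : (treeRes k (fun m => w ((!x) :: m)) / (Rt + Rf) * 2) * (F * (2 ^ l.length * S))
          ≤ (treeRes k (fun m => w ((!x) :: m)) / (Rt + Rf) * 2) * Rx := by
        apply mul_le_mul_of_nonneg_left IH
        positivity
      refine step2.trans ?_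
      show _ ≤ w [] + (2 * Rt) * (2 * Rf) / (2 * Rt + 2 * Rf)
      have hw0 := hw []
      have heq : (treeRes k (fun m => w ((!x) :: m)) / (Rt + Rf) * 2) * Rx
          = 2 * (Rt * Rf) / (Rt + Rf) := by
        rw [div_mul_eq_mul_div, div_mul_eq_mul_div]
        congr 1
        rw [mul_comm, ← mul_assoc, mul_comm Rx, hRnx]; ring
      have h2sum : (0:ℝ) < 2 * Rt + 2 * Rf := by linarith
      have heq2 : (2 * Rt) * (2 * Rf) / (2 * Rt + 2 * Rf) = 2 * (Rt * Rf) / (Rt + Rf) := by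
        rw [div_eq_div_iff h2sum.ne' hsum.ne']; ring
      rw [heq, heq2]
      linarith

/-- In `T_n`, the edge indexed by the path `e` has depth `d(e) = e.length + 1`, and the
optimal unit flow satisfies `Θ*(e) ≤ bn / (a (n - d(e) + 1) 2^(d(e)-1))`. -/
theorem stmt_14 (a b : ℝ) (ha : 0 < a) (hab : a < b) (n : ℕ) (hn : 1 ≤ n)
    (w : List Bool → ℝ) (hw : ∀ l, a ≤ w l ∧ w l ≤ b)
    (e : List Bool) (he : e.length ≤ n - 1) :
    treeFlow (n - 1) w e ≤ b * n / (a * ((n : ℝ) - e.length) * 2 ^ e.length) := by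
  obtain ⟨k, rfl⟩ : ∃ k, n = k + 1 := ⟨n - 1, by omega⟩
  simp only [Nat.add_sub_cancel] at he ⊢
  have key := treeFlow_key a ha e k w (fun l => (hw l).1) he
  set S := treeRes (k - e.length) (fun m => w (e ++ m)) with hSdef
  have hSlb : a * ((k - e.length : ℕ) + 1) ≤ S :=
    treeRes_lb a ha _ _ (fun m => (hw _).1)
  have hSpos : 0 < S := lt_of_lt_of_le (by positivity) hSlb
  have hX : (0:ℝ) < 2 ^ e.length * S := by positivity
  have h1 : treeFlow k w e ≤ treeRes k w / (2 ^ e.length * S) := by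
    rw [le_div_iff₀ hX]; exact key
  refine h1.trans ?_
  have hub : treeRes k w ≤ b * ((k:ℝ) + 1) := treeRes_ub a b ha k w hw
  have hcast : ((k - e.length : ℕ) : ℝ) = (k : ℝ) - e.length := Nat.cast_sub he
  have hd : a * (((k:ℝ) + 1) - e.length) * 2 ^ e.length ≤ 2 ^ e.length * S := by
    have : a * (((k:ℝ) + 1) - e.length) ≤ S := by
      rw [hcast] at hSlb; linarith
    calc a * (((k:ℝ) + 1) - e.length) * 2 ^ e.length ≤ S * 2 ^ e.length := by
          apply mul_le_mul_of_nonneg_right this (by positivity)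
      _ = 2 ^ e.length * S := by ring
  have hdpos : (0:ℝ) < a * (((k:ℝ) + 1) - e.length) * 2 ^ e.length := by
    have h1 : (e.length : ℝ) ≤ k := by exact_mod_cast he
    have h2 : 0 < ((k:ℝ) + 1) - e.length := by linarith
    positivity
  have hb : 0 < b := ha.trans hab
  have final : treeRes k w / (2 ^ e.length * S)
      ≤ b * ((k:ℝ) + 1) / (a * (((k:ℝ) + 1) - e.length) * 2 ^ e.length) :=
    div_le_div₀ (by positivity) hub hdpos hd
  calc treeRes k w / (2 ^ e.length * S)
      ≤ b * ((k:ℝ) + 1) / (a * (((k:ℝ) + 1) - e.length) * 2 ^ e.length) := final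
    _ = b * (↑(k+1)) / (a * ((↑(k+1):ℝ) - e.length) * 2 ^ e.length) := by push_cast; ring
end

section
/- In the binary tree T_n with edge resistances r_e = 2^{d(e)-1}X_e, X_e ∈ [a,b], if the weight of a single edge e is replaced by another value X'_e ∈ [a,b] yielding resistance Rₙ^{(e)}, then (Rₙ - Rₙ^{(e)})₊ ≤ (b-a)·2^{d(e)-1}·Θ^{*,e}(e)² and (Rₙ - Rₙ^{(e)})₋ ≤ (b-a)·2^{d(e)-1}·Θ*(e)², where Θ* and Θ^{*,e} are the optimal unit flows for the original and modified networks respectively. -/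
lemma treeRes_pos (n : ℕ) : ∀ (w : List Bool → ℝ), (∀ l, 0 < w l) → 0 < treeRes n w := by
  induction n with
  | zero => intro w hw; exact hw []
  | succ m ih =>
    intro w hw
    have h1 := ih (fun l => w (true :: l)) (fun l => hw _)
    have h2 := ih (fun l => w (false :: l)) (fun l => hw _)
    simp only [treeRes]
    have hd : 0 < (2 * treeRes m fun l => w (true :: l)) *
        (2 * treeRes m fun l => w (false :: l)) /
        (2 * (treeRes m fun l => w (true :: l)) + 2 * treeRes m fun l => w (false :: l)) :=
      div_pos (by positivity) (by positivity)
    have := hw []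
    linarith

lemma alg (A A' B D : ℝ) (hA : 0 < A) (hA' : 0 < A') (hB : 0 < B) (hD : A - A' ≤ D) :
    2 * A * (2 * B) / (2 * A + 2 * B) - 2 * A' * (2 * B) / (2 * A' + 2 * B)
      ≤ 2 * D * (B / (A' + B)) ^ 2 := by
  have key : (A - A') * (A' + B) ≤ D * (A + B) := by
    nlinarith [sq_nonneg (A - A'),
      mul_nonneg (by linarith : (0:ℝ) ≤ D - (A - A')) (by linarith : (0:ℝ) ≤ A + B)]
  have h1 : A + B ≠ 0 := by positivity
  have h2 : A' + B ≠ 0 := by positivity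
  have e1 : 2 * A * (2 * B) / (2 * A + 2 * B) - 2 * A' * (2 * B) / (2 * A' + 2 * B)
      = 2 * B ^ 2 * (A - A') / ((A + B) * (A' + B)) := by
    field_simp
    ring
  have e2 : 2 * D * (B / (A' + B)) ^ 2 = (2 * D * B ^ 2) / ((A' + B) ^ 2) := by
    rw [div_pow]; ring
  rw [e1, e2, div_le_div_iff₀ (by positivity) (by positivity)]
  nlinarith [mul_le_mul_of_nonneg_left key (by positivity : (0:ℝ) ≤ 2 * B ^ 2 * (A' + B))]

lemma key_lemma : ∀ (n : ℕ) (e : List Bool) (w w' : List Bool → ℝ),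
    e.length ≤ n → (∀ l, 0 < w l) → (∀ l, 0 < w' l) →
    (∀ l, l ≠ e → w l = w' l) →
    treeRes n w - treeRes n w' ≤ (w e - w' e) * 2 ^ e.length * (treeFlow n w' e) ^ 2 := by
  intro n
  induction n with
  | zero =>
    intro e w w' he hw hw' hagree
    have he' : e = [] := List.eq_nil_of_length_eq_zero (Nat.le_zero.1 he)
    subst he'
    simp only [treeRes, treeFlow, List.length_nil, pow_zero, one_pow, mul_one]
    exact le_rfl
  | succ m ih =>
    intro e w w' he hw hw' hagree
    match e with
    | [] =>
      have ht : (fun l => w (true :: l)) = fun l => w' (true :: l) :=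
        funext fun l => hagree _ (by simp)
      have hf : (fun l => w (false :: l)) = fun l => w' (false :: l) :=
        funext fun l => hagree _ (by simp)
      simp only [treeRes, treeFlow, ht, hf, List.length_nil, pow_zero, one_pow, mul_one]
      linarith
    | x :: l =>
      have hl : l.length ≤ m := by simpa using he
      cases x with
      | true =>
        have hf : (fun mm => w (false :: mm)) = fun mm => w' (false :: mm) :=
          funext fun mm => hagree _ (by simp)
        have hroot : w [] = w' [] := hagree _ (by simp)
        have hApos : 0 < treeRes m (fun mm => w (true :: mm)) :=
          treeRes_pos m _ (fun mm => hw _)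
        have hA'pos : 0 < treeRes m (fun mm => w' (true :: mm)) :=
          treeRes_pos m _ (fun mm => hw' _)
        have hBpos : 0 < treeRes m (fun mm => w' (false :: mm)) :=
          treeRes_pos m _ (fun mm => hw' _)
        have hIH := ih l (fun mm => w (true :: mm)) (fun mm => w' (true :: mm)) hl
          (fun mm => hw _) (fun mm => hw' _) (fun mm hm => hagree _ (by simp [hm]))
        have halg := alg (treeRes m (fun mm => w (true :: mm)))
          (treeRes m (fun mm => w' (true :: mm)))
          (treeRes m (fun mm => w' (false :: mm)))
          ((w (true :: l) - w' (true :: l)) * 2 ^ l.length *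
            (treeFlow m (fun mm => w' (true :: mm)) l) ^ 2)
          hApos hA'pos hBpos hIH
        simp only [treeRes, treeFlow, hf, Bool.not_true, List.length_cons]
        have hR : (w (true :: l) - w' (true :: l)) * 2 ^ (l.length + 1) *
            ((treeRes m (fun mm => w' (false :: mm)) /
              (treeRes m (fun mm => w' (true :: mm)) + treeRes m (fun mm => w' (false :: mm)))) *
              treeFlow m (fun mm => w' (true :: mm)) l) ^ 2
            = 2 * ((w (true :: l) - w' (true :: l)) * 2 ^ l.length *
                (treeFlow m (fun mm => w' (true :: mm)) l) ^ 2) *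
              (treeRes m (fun mm => w' (false :: mm)) /
                (treeRes m (fun mm => w' (true :: mm)) +
                  treeRes m (fun mm => w' (false :: mm)))) ^ 2 := by
          rw [pow_succ]; ring
        rw [hR]
        linarith
      | false =>
        have ht : (fun mm => w (true :: mm)) = fun mm => w' (true :: mm) :=
          funext fun mm => hagree _ (by simp)
        have hroot : w [] = w' [] := hagree _ (by simp)
        have hApos : 0 < treeRes m (fun mm => w (false :: mm)) :=
          treeRes_pos m _ (fun mm => hw _)
        have hA'pos : 0 < treeRes m (fun mm => w' (false :: mm)) :=
          treeRes_pos m _ (fun mm => hw' _)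
        have hBpos : 0 < treeRes m (fun mm => w' (true :: mm)) :=
          treeRes_pos m _ (fun mm => hw' _)
        have hIH := ih l (fun mm => w (false :: mm)) (fun mm => w' (false :: mm)) hl
          (fun mm => hw _) (fun mm => hw' _) (fun mm hm => hagree _ (by simp [hm]))
        have halg := alg (treeRes m (fun mm => w (false :: mm)))
          (treeRes m (fun mm => w' (false :: mm)))
          (treeRes m (fun mm => w' (true :: mm)))
          ((w (false :: l) - w' (false :: l)) * 2 ^ l.length *
            (treeFlow m (fun mm => w' (false :: mm)) l) ^ 2)
          hApos hA'pos hBpos hIH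
        simp only [treeRes, treeFlow, ht, Bool.not_false, List.length_cons]
        have hR : (w (false :: l) - w' (false :: l)) * 2 ^ (l.length + 1) *
            ((treeRes m (fun mm => w' (true :: mm)) /
              (treeRes m (fun mm => w' (true :: mm)) + treeRes m (fun mm => w' (false :: mm)))) *
              treeFlow m (fun mm => w' (false :: mm)) l) ^ 2
            = 2 * ((w (false :: l) - w' (false :: l)) * 2 ^ l.length *
                (treeFlow m (fun mm => w' (false :: mm)) l) ^ 2) *
              (treeRes m (fun mm => w' (true :: mm)) /
                (treeRes m (fun mm => w' (false :: mm)) +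
                  treeRes m (fun mm => w' (true :: mm)))) ^ 2 := by
          rw [pow_succ]; ring_nf
        rw [hR]
        ring_nf at halg ⊢
        linarith

/-- If the weight of the single edge `e` (at depth `d(e) = e.length + 1`, so with
resistance `2^(d(e)-1) X_e`) is changed, the positive and negative parts of the change
in effective resistance are bounded via the optimal flows of the two networks. -/
theorem stmt_16 (a b : ℝ) (ha : 0 < a) (hab : a < b) (n : ℕ) (hn : 1 ≤ n)
    (e : List Bool) (he : e.length ≤ n - 1) (w w' : List Bool → ℝ)
    (hw : ∀ l, a ≤ w l ∧ w l ≤ b) (hw' : ∀ l, a ≤ w' l ∧ w' l ≤ b)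
    (hagree : ∀ l, l ≠ e → w l = w' l) :
    max (treeRes (n - 1) w - treeRes (n - 1) w') 0
        ≤ (b - a) * 2 ^ e.length * (treeFlow (n - 1) w' e) ^ 2 ∧
      max (treeRes (n - 1) w' - treeRes (n - 1) w) 0
        ≤ (b - a) * 2 ^ e.length * (treeFlow (n - 1) w e) ^ 2 := by
  have hwp : ∀ l, 0 < w l := fun l => lt_of_lt_of_le ha (hw l).1
  have hw'p : ∀ l, 0 < w' l := fun l => lt_of_lt_of_le ha (hw' l).1
  have h1 := key_lemma (n - 1) e w w' he hwp hw'p hagree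
  have h2 := key_lemma (n - 1) e w' w he hw'p hwp (fun l hl => (hagree l hl).symm)
  have hd1 : w e - w' e ≤ b - a := by linarith [(hw e).2, (hw' e).1]
  have hd2 : w' e - w e ≤ b - a := by linarith [(hw' e).2, (hw e).1]
  constructor
  · apply max_le
    · refine h1.trans ?_
      exact mul_le_mul_of_nonneg_right
        (mul_le_mul_of_nonneg_right hd1 (by positivity)) (sq_nonneg _)
    · exact mul_nonneg (mul_nonneg (by linarith) (by positivity)) (sq_nonneg _)
  · apply max_le
    · refine h2.trans ?_
      exact mul_le_mul_of_nonneg_right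
        (mul_le_mul_of_nonneg_right hd2 (by positivity)) (sq_nonneg _)
    · exact mul_nonneg (mul_nonneg (by linarith) (by positivity)) (sq_nonneg _)
end
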